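/- Let ℙ be the 0/1 integer linear program min{ f(x) : x ∈ {0,1}^n, g_ℓ(x) ≥ 0 for ℓ ∈ [m] } with m ≥ 1 linear constraints, where f and each g_ℓ are affine-linear functions of x, every constraint is non-redundant (for each ℓ there exists a point of {0,1}^n violating g_ℓ(x) ≥ 0), and there exists at least one integral feasible point; let f(x_{I*}) denote the minimum of f over integral feasible points. Then the Lasserre relaxation Las_{n−1}(ℙ) has an integrality gap (i.e., there exists a feasible y with Σ_{I⊆N} f_I y_I < f(x_{I*})) if and only if there exists a family of reals {y_I^N : I ⊆ N} satisfying all of: (i) y_I^N > 0 for all I ⊆ N; (ii) Σ_{I⊆N} y_I^N = 1; (iii) for each ℓ ∈ [m] there is exactly one K_ℓ ⊆ N with g_ℓ(x_{K_ℓ}) y_{K_ℓ}^N < 0; (iv) for each ℓ ∈ [m] and every J ⊆ N with J ≠ K_ℓ, g_ℓ(x_J) y_J^N > 0; (v) Σ_{I⊆N} 1/(g_ℓ(x_I) y_I^N) ≤ 0 for all ℓ ∈ [m]; and (vi) Σ_{I⊆N} y_I^N f(x_I) < f(x_{I*}). -/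

import Mathlib

open Finset Matrix

/-- Value of the affine-linear function `x ↦ ∑ i, a i * x i + b` at the 0/1 point `x_I`. -/
def gval {n : ℕ} (a : Fin n → ℝ) (b : ℝ) (I : Finset (Fin n)) : ℝ :=
  (∑ i ∈ I, a i) + b

/-- The shift operator: `(g∗y)_I = ∑ i, a i * y_{I ∪ {i}} + b * y_I`. -/
def shiftVec {n : ℕ} (a : Fin n → ℝ) (b : ℝ) (y : Finset (Fin n) → ℝ)
    (I : Finset (Fin n)) : ℝ :=
  (∑ i : Fin n, a i * y (insert i I)) + b * y I

/-- The index set `P_{n-1}(N)`: all subsets of `N = {1,...,n}` except `N` itself. -/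
abbrev Idx (n : ℕ) := {I : Finset (Fin n) // I ≠ Finset.univ}

/-- The `(n-1)`-moment matrix of `w`, with `(I,J)`-entry `w_{I ∪ J}`. -/
def Mnm1 {n : ℕ} (w : Finset (Fin n) → ℝ) : Matrix (Idx n) (Idx n) ℝ :=
  Matrix.of fun I J => w (I.1 ∪ J.1)

/-- The full `n`-moment matrix of `w`, indexed by all subsets of `N`. -/
def Mfull {n : ℕ} (w : Finset (Fin n) → ℝ) : Matrix (Finset (Fin n)) (Finset (Fin n)) ℝ :=
  Matrix.of fun I J => w (I ∪ J)

namespace LasAux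
variable {n : ℕ}

set_option linter.unusedVariables false
set_option linter.unnecessarySeqFocus false

def zet (x : Finset (Fin n) → ℝ) (H : Finset (Fin n)) : ℝ :=
  ∑ I : Finset (Fin n), if I ⊆ H then x I else 0
def mob (s : Finset (Fin n) → ℝ) (I : Finset (Fin n)) : ℝ :=
  ∑ J : Finset (Fin n), if J ⊆ I then (-1:ℝ)^(I.card - J.card) * s J else 0
def mup (y : Finset (Fin n) → ℝ) (H : Finset (Fin n)) : ℝ :=
  ∑ T : Finset (Fin n), if H ⊆ T then (-1:ℝ)^(T.card - H.card) * y T else 0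
def ext (x : Idx n → ℝ) : Finset (Fin n) → ℝ :=
  fun I => if h : I = Finset.univ then 0 else x ⟨I, h⟩

lemma ext_univ (x : Idx n → ℝ) : ext x Finset.univ = 0 := by simp [ext]
lemma ext_apply (x : Idx n → ℝ) (I : Idx n) : ext x I.1 = x I := by simp [ext, I.2]

lemma sum_idx_eq (g : Finset (Fin n) → ℝ) (hg : g Finset.univ = 0) :
    ∑ I : Idx n, g I.1 = ∑ I : Finset (Fin n), g I := by
  classical
  rw [← Finset.sum_erase (Finset.univ : Finset (Finset (Fin n))) (by simpa using hg)]
  rw [eq_comm]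
  apply Finset.sum_subtype
  intro I
  simp [Finset.mem_erase]

lemma sum_two (f : Finset (Fin n) → ℝ) (H1 H2 : Finset (Fin n)) (h12 : H1 ≠ H2)
    (h0 : ∀ H, H ≠ H1 → H ≠ H2 → f H = 0) :
    ∑ H : Finset (Fin n), f H = f H1 + f H2 := by
  rw [← Finset.add_sum_erase _ f (Finset.mem_univ H1),
      ← Finset.add_sum_erase _ f (Finset.mem_erase.2 ⟨h12.symm, Finset.mem_univ H2⟩)]
  have hz : ∑ H ∈ (Finset.univ.erase H1).erase H2, f H = 0 :=
    Finset.sum_eq_zero (fun H hH => by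
      rw [Finset.mem_erase, Finset.mem_erase] at hH
      exact h0 H hH.2.1 hH.1)
  rw [hz, add_zero]

lemma pow_sum (S : Finset (Fin n)) :
    ∑ A ∈ S.powerset, (-1:ℝ)^A.card = if S = ∅ then 1 else 0 := by
  have := @Finset.sum_powerset_neg_one_pow_card (Fin n) _ S
  have h2 : ((∑ m ∈ S.powerset, (-1 : ℤ) ^ m.card : ℤ) : ℝ)
      = ∑ A ∈ S.powerset, (-1:ℝ)^A.card := by push_cast; ring_nf
  rw [← h2, this]
  split <;> simp

lemma interval_bot (K T : Finset (Fin n)) :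
    (∑ I : Finset (Fin n), if K ⊆ I ∧ I ⊆ T then (-1:ℝ)^(I.card - K.card) else 0)
      = if K = T then 1 else 0 := by
  by_cases hKT : K ⊆ T
  · have h1 : (∑ I : Finset (Fin n), if K ⊆ I ∧ I ⊆ T then (-1:ℝ)^(I.card - K.card) else 0)
        = ∑ I ∈ Finset.univ.filter (fun I => K ⊆ I ∧ I ⊆ T), (-1:ℝ)^(I.card - K.card) := by
      rw [Finset.sum_filter]
    rw [h1]
    have h2 : ∑ I ∈ Finset.univ.filter (fun I => K ⊆ I ∧ I ⊆ T), (-1:ℝ)^(I.card - K.card)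
        = ∑ A ∈ (T \ K).powerset, (-1:ℝ)^A.card := by
      refine Finset.sum_nbij' (fun I => I \ K) (fun A => A ∪ K) ?_ ?_ ?_ ?_ ?_
      · intro I hI
        simp only [Finset.mem_filter, Finset.mem_univ, true_and] at hI
        exact Finset.mem_powerset.2 (Finset.sdiff_subset_sdiff hI.2 le_rfl)
      · intro A hA
        simp only [Finset.mem_powerset] at hA
        simp only [Finset.mem_filter, Finset.mem_univ, true_and]
        constructor
        · exact Finset.subset_union_right
        · exact Finset.union_subset (hA.trans (Finset.sdiff_subset)) hKT
      · intro I hI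
        simp only [Finset.mem_filter, Finset.mem_univ, true_and] at hI
        exact Finset.sdiff_union_of_subset hI.1
      · intro A hA
        simp only [Finset.mem_powerset] at hA
        apply Finset.union_sdiff_cancel_right
        exact Finset.disjoint_of_subset_left hA (Finset.sdiff_disjoint)
      · intro I hI
        simp only [Finset.mem_filter, Finset.mem_univ, true_and] at hI
        rw [Finset.card_sdiff_of_subset hI.1]
    rw [h2, pow_sum]
    have : (T \ K = ∅) ↔ (K = T) := by
      rw [Finset.sdiff_eq_empty_iff_subset]
      exact ⟨fun h => le_antisymm hKT h, fun h => h ▸ le_rfl⟩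
    simp only [this]
  · have hKT' : K ≠ T := fun h => hKT (h ▸ le_rfl)
    rw [if_neg hKT']
    apply Finset.sum_eq_zero
    intro I _
    rw [if_neg]
    rintro ⟨h1, h2⟩
    exact hKT (h1.trans h2)

lemma interval_top (K T : Finset (Fin n)) :
    (∑ I : Finset (Fin n), if K ⊆ I ∧ I ⊆ T then (-1:ℝ)^(T.card - I.card) else 0)
      = if K = T then 1 else 0 := by
  have key : ∀ I : Finset (Fin n),
      (if K ⊆ I ∧ I ⊆ T then (-1:ℝ)^(T.card - I.card) else 0)
        = (-1:ℝ)^(T.card - K.card) * (if K ⊆ I ∧ I ⊆ T then (-1:ℝ)^(I.card - K.card) else 0) := by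
    intro I
    by_cases h : K ⊆ I ∧ I ⊆ T
    · rw [if_pos h, if_pos h]
      have hIT : I.card ≤ T.card := Finset.card_le_card h.2
      have hKI : K.card ≤ I.card := Finset.card_le_card h.1
      have : (T.card - K.card) = (T.card - I.card) + (I.card - K.card) := by omega
      rw [this, pow_add]
      rw [mul_assoc, ← pow_add]
      have : (I.card - K.card) + (I.card - K.card) = 2 * (I.card - K.card) := by omega
      rw [this, pow_mul]
      norm_num
    · rw [if_neg h, if_neg h, mul_zero]
  simp_rw [key, ← Finset.mul_sum, interval_bot]
  by_cases h : K = T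
  · subst h; simp
  · simp [h]


/-- zeta of Möbius recovers the function -/
lemma zet_mob (s : Finset (Fin n) → ℝ) (H : Finset (Fin n)) : zet (mob s) H = s H := by
  unfold zet mob
  have step : ∀ I : Finset (Fin n),
      (if I ⊆ H then (∑ J : Finset (Fin n), if J ⊆ I then (-1:ℝ)^(I.card - J.card) * s J else 0) else 0)
      = ∑ J : Finset (Fin n), (if J ⊆ I ∧ I ⊆ H then (-1:ℝ)^(I.card - J.card) * s J else 0) := by
    intro I
    by_cases h : I ⊆ H
    · rw [if_pos h]; apply Finset.sum_congr rfl; intro J _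
      by_cases h2 : J ⊆ I
      · rw [if_pos h2, if_pos ⟨h2, h⟩]
      · rw [if_neg h2, if_neg (fun hh => h2 hh.1)]
    · rw [if_neg h, eq_comm]
      apply Finset.sum_eq_zero; intro J _
      rw [if_neg (fun hh => h hh.2)]
  simp_rw [step]
  rw [Finset.sum_comm]
  have inner : ∀ J : Finset (Fin n),
      (∑ I : Finset (Fin n), if J ⊆ I ∧ I ⊆ H then (-1:ℝ)^(I.card - J.card) * s J else 0)
      = (if J = H then 1 else 0) * s J := by
    intro J
    rw [← interval_bot J H, Finset.sum_mul]
    apply Finset.sum_congr rfl; intro I _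
    by_cases h : J ⊆ I ∧ I ⊆ H
    · rw [if_pos h, if_pos h]
    · rw [if_neg h, if_neg h, zero_mul]
  simp_rw [inner]
  simp

/-- inversion of the upper Möbius transform -/
lemma mup_inv (y : Finset (Fin n) → ℝ) (K : Finset (Fin n)) :
    (∑ H : Finset (Fin n), if K ⊆ H then mup y H else 0) = y K := by
  unfold mup
  have step : ∀ H : Finset (Fin n),
      (if K ⊆ H then (∑ T : Finset (Fin n), if H ⊆ T then (-1:ℝ)^(T.card - H.card) * y T else 0) else 0)
      = ∑ T : Finset (Fin n), (if K ⊆ H ∧ H ⊆ T then (-1:ℝ)^(T.card - H.card) * y T else 0) := by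
    intro H
    by_cases h : K ⊆ H
    · rw [if_pos h]; apply Finset.sum_congr rfl; intro T _
      by_cases h2 : H ⊆ T
      · rw [if_pos h2, if_pos ⟨h, h2⟩]
      · rw [if_neg h2, if_neg (fun hh => h2 hh.2)]
    · rw [if_neg h, eq_comm]
      apply Finset.sum_eq_zero; intro T _
      rw [if_neg (fun hh => h hh.1)]
  simp_rw [step]
  rw [Finset.sum_comm]
  have inner : ∀ T : Finset (Fin n),
      (∑ H : Finset (Fin n), if K ⊆ H ∧ H ⊆ T then (-1:ℝ)^(T.card - H.card) * y T else 0)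
      = (if K = T then 1 else 0) * y T := by
    intro T
    rw [← interval_top K T, Finset.sum_mul]
    apply Finset.sum_congr rfl; intro H _
    by_cases h : K ⊆ H ∧ H ⊆ T
    · rw [if_pos h, if_pos h]
    · rw [if_neg h, if_neg h, zero_mul]
  simp_rw [inner]
  simp


/-- hyperplane condition satisfied by zeta transforms of vectors vanishing at `univ` -/
lemma hyperplane (x : Finset (Fin n) → ℝ) (hx : x Finset.univ = 0) :
    ∑ H : Finset (Fin n), (-1:ℝ)^H.card * zet x H = 0 := by
  unfold zet
  have step : ∀ H : Finset (Fin n), (-1:ℝ)^H.card * (∑ I : Finset (Fin n), if I ⊆ H then x I else 0)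
      = ∑ I : Finset (Fin n), (if I ⊆ H then (-1:ℝ)^H.card * x I else 0) := by
    intro H
    rw [Finset.mul_sum]
    apply Finset.sum_congr rfl; intro I _
    by_cases h : I ⊆ H <;> simp [h]
  simp_rw [step]
  rw [Finset.sum_comm]
  have inner : ∀ I : Finset (Fin n),
      (∑ H : Finset (Fin n), if I ⊆ H then (-1:ℝ)^H.card * x I else 0)
      = ((-1:ℝ)^I.card * (if I = Finset.univ then 1 else 0)) * x I := by
    intro I
    rw [← interval_bot I Finset.univ, Finset.mul_sum, Finset.sum_mul]
    apply Finset.sum_congr rfl; intro H _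
    by_cases h : I ⊆ H
    · have h2 : I ⊆ H ∧ H ⊆ Finset.univ := ⟨h, Finset.subset_univ H⟩
      rw [if_pos h, if_pos h2]
      have hc : I.card ≤ H.card := Finset.card_le_card h
      have hp : (-1:ℝ)^I.card * (-1:ℝ)^(H.card - I.card) = (-1:ℝ)^H.card := by
        rw [← pow_add]; congr 1; omega
      rw [← hp]
    · rw [if_neg h, if_neg (fun hh => h hh.1)]; ring
  simp_rw [inner]
  rw [Finset.sum_eq_single Finset.univ]
  · simp [hx]
  · intro I _ hI; simp [hI]
  · simp


/-- The fundamental identity: moment-type double sums diagonalize over the zeta transform. -/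
lemma double_form (V x : Finset (Fin n) → ℝ) :
    (∑ I : Finset (Fin n), ∑ J : Finset (Fin n),
      x I * ((∑ H : Finset (Fin n), if I ∪ J ⊆ H then V H else 0) * x J))
    = ∑ H : Finset (Fin n), V H * (zet x H)^2 := by
  have step : ∀ I J : Finset (Fin n),
      x I * ((∑ H : Finset (Fin n), if I ∪ J ⊆ H then V H else 0) * x J)
      = ∑ H : Finset (Fin n),
          (if I ⊆ H then x I else 0) * (if J ⊆ H then x J else 0) * V H := by
    intro I J
    rw [Finset.sum_mul, Finset.mul_sum]
    apply Finset.sum_congr rfl; intro H _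
    by_cases h1 : I ⊆ H <;> by_cases h2 : J ⊆ H <;>
      simp [Finset.union_subset_iff, h1, h2] <;> ring
  simp_rw [step]
  have swap1 : ∀ I : Finset (Fin n),
      (∑ J : Finset (Fin n), ∑ H : Finset (Fin n),
        (if I ⊆ H then x I else 0) * (if J ⊆ H then x J else 0) * V H)
      = ∑ H : Finset (Fin n), ∑ J : Finset (Fin n),
        (if I ⊆ H then x I else 0) * (if J ⊆ H then x J else 0) * V H :=
    fun I => Finset.sum_comm
  simp_rw [swap1]
  rw [Finset.sum_comm]
  apply Finset.sum_congr rfl; intro H _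
  have collect : ∀ I : Finset (Fin n),
      (∑ J : Finset (Fin n), (if I ⊆ H then x I else 0) * (if J ⊆ H then x J else 0) * V H)
      = (if I ⊆ H then x I else 0) * zet x H * V H := by
    intro I
    rw [← Finset.sum_mul, ← Finset.mul_sum]
    rfl
  simp_rw [collect]
  rw [← Finset.sum_mul, ← Finset.sum_mul]
  show zet x H * zet x H * V H = V H * zet x H ^ 2
  ring


lemma shift_eq (a : Fin n → ℝ) (b : ℝ) (y Y : Finset (Fin n) → ℝ)
    (hy : ∀ K, y K = ∑ H : Finset (Fin n), if K ⊆ H then Y H else 0) (I : Finset (Fin n)) :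
    shiftVec a b y I = ∑ H : Finset (Fin n), if I ⊆ H then gval a b H * Y H else 0 := by
  unfold shiftVec
  simp_rw [hy]
  have step : ∀ i : Fin n,
      a i * (∑ H : Finset (Fin n), if insert i I ⊆ H then Y H else 0)
      = ∑ H : Finset (Fin n), if I ⊆ H then (if i ∈ H then a i else 0) * Y H else 0 := by
    intro i
    rw [Finset.mul_sum]
    apply Finset.sum_congr rfl; intro H _
    by_cases h1 : I ⊆ H <;> by_cases h2 : i ∈ H <;>
      simp [Finset.insert_subset_iff, h1, h2]
  simp_rw [step]
  rw [Finset.sum_comm, Finset.mul_sum, ← Finset.sum_add_distrib]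
  apply Finset.sum_congr rfl; intro H _
  by_cases h : I ⊆ H
  · simp only [if_pos h]
    rw [← Finset.sum_mul]
    have : (∑ i : Fin n, if i ∈ H then a i else 0) = ∑ i ∈ H, a i := by
      rw [Finset.sum_ite_mem, Finset.univ_inter]
    rw [this]
    unfold gval; ring
  · simp only [if_neg h]
    simp
lemma obj_eq (c : Fin n → ℝ) (c0 : ℝ) (y Y : Finset (Fin n) → ℝ)
    (hy : ∀ K, y K = ∑ H : Finset (Fin n), if K ⊆ H then Y H else 0) :
    c0 * y ∅ + (∑ i : Fin n, c i * y {i}) = ∑ H : Finset (Fin n), Y H * gval c c0 H := by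
  simp_rw [hy]
  have step : ∀ i : Fin n,
      c i * (∑ H : Finset (Fin n), if {i} ⊆ H then Y H else 0)
      = ∑ H : Finset (Fin n), (if i ∈ H then c i else 0) * Y H := by
    intro i
    rw [Finset.mul_sum]
    apply Finset.sum_congr rfl; intro H _
    by_cases h : i ∈ H <;> simp [Finset.singleton_subset_iff, h]
  simp_rw [step]
  rw [Finset.sum_comm, Finset.mul_sum, ← Finset.sum_add_distrib]
  apply Finset.sum_congr rfl; intro H _
  rw [if_pos (Finset.empty_subset H), ← Finset.sum_mul]
  have : (∑ i : Fin n, if i ∈ H then c i else 0) = ∑ i ∈ H, c i := by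
    rw [Finset.sum_ite_mem, Finset.univ_inter]
  rw [this]
  unfold gval; ring


lemma empty_ne_univ (hn : 1 ≤ n) : (∅ : Finset (Fin n)) ≠ Finset.univ := by
  intro h
  have := congrArg Finset.card h
  simp [Finset.card_univ] at this
  omega

lemma psd_quad (hn : 1 ≤ n) (v : Finset (Fin n) → ℝ) (K : Finset (Fin n))
    (hK : v K < 0) (hpos : ∀ J, J ≠ K → 0 < v J)
    (hsum : ∑ H : Finset (Fin n), (v H)⁻¹ ≤ 0)
    (s : Finset (Fin n) → ℝ) (hs : ∑ H : Finset (Fin n), (-1:ℝ)^H.card * s H = 0) :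
    0 ≤ ∑ H : Finset (Fin n), v H * s H ^ 2 := by
  classical
  set E := (Finset.univ : Finset (Finset (Fin n))).erase K with hE
  have hEne : E.Nonempty := by
    rcases eq_or_ne K ∅ with h | h
    · exact ⟨Finset.univ, by simp [hE, h, (empty_ne_univ hn).symm]⟩
    · exact ⟨∅, by simp [hE, Ne.symm h]⟩
  set T := ∑ J ∈ E, (v J)⁻¹ with hT
  have hTpos : 0 < T :=
    Finset.sum_pos (fun J hJ => inv_pos.2 (hpos J (Finset.ne_of_mem_erase hJ))) hEne
  have hsplit : (v K)⁻¹ + T = ∑ H : Finset (Fin n), (v H)⁻¹ := by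
    rw [hT, hE]; exact Finset.add_sum_erase _ (fun H => (v H)⁻¹) (Finset.mem_univ K)
  have hTle : T ≤ -(v K)⁻¹ := by linarith [hsplit ▸ hsum]
  have hsK : (-1:ℝ)^K.card * s K + ∑ J ∈ E, (-1:ℝ)^J.card * s J = 0 := by
    rw [hE, Finset.add_sum_erase _ (fun H => (-1:ℝ)^H.card * s H) (Finset.mem_univ K)]
    exact hs
  set S := ∑ J ∈ E, (-1:ℝ)^J.card * s J with hS
  have hsq1 : ∀ k : ℕ, ((-1:ℝ)^k)^2 = 1 := by
    intro k; rw [← pow_mul, mul_comm, pow_mul]; norm_num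
  have hSK : S^2 = s K ^ 2 := by
    have : S = -((-1:ℝ)^K.card * s K) := by linarith
    rw [this, neg_sq, mul_pow, hsq1, one_mul]
  set Q := ∑ J ∈ E, v J * s J ^ 2 with hQ
  have hCS : S^2 ≤ T * Q := by
    have key := Finset.sum_mul_sq_le_sq_mul_sq E
      (fun J => (Real.sqrt (v J))⁻¹)
      (fun J => Real.sqrt (v J) * ((-1:ℝ)^J.card * s J))
    have e1 : ∀ J ∈ E, (Real.sqrt (v J))⁻¹ * (Real.sqrt (v J) * ((-1:ℝ)^J.card * s J))
        = (-1:ℝ)^J.card * s J := by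
      intro J hJ
      have hv : 0 < v J := hpos J (Finset.ne_of_mem_erase hJ)
      have : Real.sqrt (v J) ≠ 0 := ne_of_gt (Real.sqrt_pos.2 hv)
      field_simp
    have e2 : ∀ J ∈ E, ((Real.sqrt (v J))⁻¹)^2 = (v J)⁻¹ := by
      intro J hJ
      have hv : 0 ≤ v J := le_of_lt (hpos J (Finset.ne_of_mem_erase hJ))
      rw [inv_pow, Real.sq_sqrt hv]
    have e3 : ∀ J ∈ E, (Real.sqrt (v J) * ((-1:ℝ)^J.card * s J))^2 = v J * s J ^ 2 := by
      intro J hJ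
      have hv : 0 ≤ v J := le_of_lt (hpos J (Finset.ne_of_mem_erase hJ))
      rw [mul_pow, Real.sq_sqrt hv, mul_pow, hsq1, one_mul]
    rw [Finset.sum_congr rfl e1, Finset.sum_congr rfl e2, Finset.sum_congr rfl e3] at key
    exact key
  have hsplit2 : v K * s K ^ 2 + Q = ∑ H : Finset (Fin n), v H * s H ^ 2 := by
    rw [hQ, hE]; exact Finset.add_sum_erase _ (fun H => v H * s H ^ 2) (Finset.mem_univ K)
  rw [← hsplit2]
  have hQge : s K ^ 2 / T ≤ Q := by
    rw [div_le_iff₀ hTpos]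
    calc s K ^ 2 = S ^ 2 := hSK.symm
    _ ≤ T * Q := hCS
    _ = Q * T := mul_comm _ _
  have hinv : -(v K) ≤ T⁻¹ := by
    have h1 : T ≤ (-(v K))⁻¹ := by rw [inv_neg]; exact hTle
    have h2 : ((-(v K))⁻¹)⁻¹ ≤ T⁻¹ := inv_anti₀ hTpos h1
    rwa [inv_inv] at h2
  have : 0 ≤ s K ^ 2 * (v K + T⁻¹) := by
    apply mul_nonneg (sq_nonneg _); linarith
  have hfin : s K ^ 2 * (v K + T⁻¹) = v K * s K ^ 2 + s K ^ 2 / T := by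
    field_simp
  nlinarith [hQge, this, hfin]


lemma mob_univ (s : Finset (Fin n) → ℝ)
    (hs : ∑ H : Finset (Fin n), (-1:ℝ)^H.card * s H = 0) :
    mob s Finset.univ = 0 := by
  unfold mob
  have key : ∀ J : Finset (Fin n),
      (if J ⊆ Finset.univ then (-1:ℝ)^((Finset.univ : Finset (Fin n)).card - J.card) * s J else 0)
      = (-1:ℝ)^n * ((-1:ℝ)^J.card * s J) := by
    intro J
    rw [if_pos (Finset.subset_univ J)]
    have hJ : J.card ≤ n := by
      have := Finset.card_le_univ J; simpa [Finset.card_univ] using this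
    have hc : (Finset.univ : Finset (Fin n)).card = n := by simp
    rw [hc]
    have : (-1:ℝ)^(n - J.card) = (-1:ℝ)^n * (-1:ℝ)^J.card := by
      have h2 : n + J.card = (n - J.card) + 2 * J.card := by omega
      rw [← pow_add, h2, pow_add, pow_mul]
      norm_num
    rw [this]; ring
  simp_rw [key, ← Finset.mul_sum, hs, mul_zero]

/-- every `s` satisfying the hyperplane condition is the zeta transform of a vector
vanishing at `univ` -/
lemma zet_ext_mob (s : Finset (Fin n) → ℝ)
    (hs : ∑ H : Finset (Fin n), (-1:ℝ)^H.card * s H = 0) (H : Finset (Fin n)) :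
    zet (ext (fun I : Idx n => mob s I.1)) H = s H := by
  by_cases hH : H = Finset.univ
  · subst hH
    unfold zet
    have e1 : ∀ I : Finset (Fin n),
        (if I ⊆ Finset.univ then ext (fun I : Idx n => mob s I.1) I else 0)
        = ext (fun I : Idx n => mob s I.1) I := fun I => if_pos (Finset.subset_univ I)
    simp_rw [e1]
    have e2 : ∀ I : Finset (Fin n), ext (fun I : Idx n => mob s I.1) I = mob s I := by
      intro I
      by_cases h : I = Finset.univ
      · subst h; rw [ext_univ, mob_univ s hs]
      · simp [ext, h]
    simp_rw [e2]
    have : ∑ I : Finset (Fin n), mob s I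
        = ∑ I : Finset (Fin n), if I ⊆ Finset.univ then mob s I else 0 := by
      apply Finset.sum_congr rfl; intro I _; rw [if_pos (Finset.subset_univ I)]
    rw [this]
    exact zet_mob s Finset.univ
  · unfold zet
    have e1 : ∀ I : Finset (Fin n),
        (if I ⊆ H then ext (fun I : Idx n => mob s I.1) I else 0)
        = (if I ⊆ H then mob s I else 0) := by
      intro I
      by_cases h : I ⊆ H
      · rw [if_pos h, if_pos h]
        have hI : I ≠ Finset.univ := by
          intro hu; subst hu; exact hH (le_antisymm (Finset.subset_univ H) h)
        simp [ext, hI]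
      · rw [if_neg h, if_neg h]
    simp_rw [e1]
    exact zet_mob s H

lemma dot_full (w : Finset (Fin n) → ℝ) (x : Finset (Fin n) → ℝ) :
    x ⬝ᵥ (Mfull w) *ᵥ x
      = ∑ I : Finset (Fin n), ∑ J : Finset (Fin n), x I * (w (I ∪ J) * x J) := by
  simp [dotProduct, Matrix.mulVec, Mfull, Finset.mul_sum]

lemma dot_nm1 (w : Finset (Fin n) → ℝ) (x : Idx n → ℝ) :
    x ⬝ᵥ (Mnm1 w) *ᵥ x
      = ∑ I : Finset (Fin n), ∑ J : Finset (Fin n), ext x I * (w (I ∪ J) * ext x J) := by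
  have expand : x ⬝ᵥ (Mnm1 w) *ᵥ x
      = ∑ I : Idx n, x I * (∑ J : Idx n, w (I.1 ∪ J.1) * x J) := by
    simp [dotProduct, Matrix.mulVec, Mnm1, Finset.mul_sum]
  rw [expand]
  have inner : ∀ I : Finset (Fin n),
      (∑ J : Idx n, w (I ∪ J.1) * x J) = ∑ J : Finset (Fin n), w (I ∪ J) * ext x J := by
    intro I
    rw [← sum_idx_eq (fun J => w (I ∪ J) * ext x J) (by simp [ext_univ])]
    apply Finset.sum_congr rfl; intro J _
    rw [ext_apply]
  have step2 := sum_idx_eq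
    (fun I' : Finset (Fin n) => ext x I' * ∑ J : Finset (Fin n), w (I' ∪ J) * ext x J)
    (by simp [ext_univ])
  calc ∑ I : Idx n, x I * (∑ J : Idx n, w (I.1 ∪ J.1) * x J)
      = ∑ I : Idx n, ext x I.1 * ∑ J : Finset (Fin n), w (I.1 ∪ J) * ext x J := by
        apply Finset.sum_congr rfl; intro I _
        rw [ext_apply, inner I.1]
    _ = ∑ I : Finset (Fin n), ext x I * ∑ J : Finset (Fin n), w (I ∪ J) * ext x J := step2
    _ = ∑ I : Finset (Fin n), ∑ J : Finset (Fin n), ext x I * (w (I ∪ J) * ext x J) := by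
        apply Finset.sum_congr rfl; intro I _
        rw [Finset.mul_sum]

lemma herm_full (w : Finset (Fin n) → ℝ) : (Mfull w).IsHermitian := by
  unfold Matrix.IsHermitian
  ext I J
  simp [Mfull, Matrix.conjTranspose_apply, Finset.union_comm]

lemma herm_nm1 (w : Finset (Fin n) → ℝ) : (Mnm1 w).IsHermitian := by
  unfold Matrix.IsHermitian
  ext I J
  simp [Mnm1, Matrix.conjTranspose_apply, Finset.union_comm]

lemma star_id (x : Finset (Fin n) → ℝ) : star x = x := by funext I; simp
lemma star_id' (x : Idx n → ℝ) : star x = x := by funext I; simp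


end LasAux

open LasAux

/-- Characterization of integrality gaps of `Las_{n-1}` for 0/1 integer linear programs:
the objective is `f(x) = ∑ i, c i * x i + c0`, the constraints are
`g_ℓ(x) = ∑ i, a ℓ i * x i + b ℓ ≥ 0`, each constraint is non-redundant, and
`Istar` is an optimal integral feasible point. -/
theorem lasserre_level_pred_gap_iff (n m : ℕ) (hn : 1 ≤ n) (hm : 1 ≤ m)
    (c : Fin n → ℝ) (c0 : ℝ)
    (a : Fin m → Fin n → ℝ) (b : Fin m → ℝ)
    (hnonred : ∀ ℓ : Fin m, ∃ I : Finset (Fin n), gval (a ℓ) (b ℓ) I < 0)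
    (Istar : Finset (Fin n))
    (hIstar_feas : ∀ ℓ : Fin m, 0 ≤ gval (a ℓ) (b ℓ) Istar)
    (hIstar_opt : ∀ I : Finset (Fin n), (∀ ℓ : Fin m, 0 ≤ gval (a ℓ) (b ℓ) I) →
      gval c c0 Istar ≤ gval c c0 I) :
    (∃ y : Finset (Fin n) → ℝ,
        y ∅ = 1 ∧
        (Mfull y).PosSemidef ∧
        (∀ ℓ : Fin m, (Mnm1 (shiftVec (a ℓ) (b ℓ) y)).PosSemidef) ∧
        c0 * y ∅ + (∑ i : Fin n, c i * y {i}) < gval c c0 Istar)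
      ↔ (∃ Y : Finset (Fin n) → ℝ,
          (∀ I : Finset (Fin n), 0 < Y I) ∧
          (∑ I : Finset (Fin n), Y I = 1) ∧
          (∀ ℓ : Fin m, ∃ K : Finset (Fin n),
            gval (a ℓ) (b ℓ) K * Y K < 0 ∧
            ∀ J : Finset (Fin n), J ≠ K → 0 < gval (a ℓ) (b ℓ) J * Y J) ∧
          (∀ ℓ : Fin m, ∑ I : Finset (Fin n), 1 / (gval (a ℓ) (b ℓ) I * Y I) ≤ 0) ∧
          ∑ I : Finset (Fin n), Y I * gval c c0 I < gval c c0 Istar) := by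
  classical
  have hsq1 : ∀ k : ℕ, ((-1:ℝ)^k)^2 = 1 := by
    intro k; rw [← pow_mul, mul_comm, pow_mul]; norm_num
  constructor
  · -- forward direction: a gap solution yields the combinatorial certificate
    rintro ⟨y, hy0, hfull, hshift, hobj⟩
    have hy : ∀ K, y K = ∑ H : Finset (Fin n), if K ⊆ H then mup y H else 0 :=
      fun K => (mup_inv y K).symm
    -- nonnegativity of the Möbius coefficients
    have hY0 : ∀ H0 : Finset (Fin n), 0 ≤ mup y H0 := by
      intro H0
      set d : Finset (Fin n) → ℝ := fun T => if T = H0 then 1 else 0 with hd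
      have h := hfull.dotProduct_mulVec_nonneg (mob d)
      rw [star_id, dot_full] at h
      simp_rw [hy] at h
      rw [double_form (mup y) (mob d)] at h
      simp_rw [zet_mob] at h
      have heval : ∑ H : Finset (Fin n), mup y H * d H ^ 2 = mup y H0 := by
        rw [Finset.sum_eq_single H0]
        · simp [hd]
        · intro H _ hH; simp [hd, hH]
        · simp
      rwa [heval] at h
    -- total mass one
    have hsum1 : ∑ H : Finset (Fin n), mup y H = 1 := by
      have h := hy ∅
      rw [hy0] at h
      have h2 : (∑ H : Finset (Fin n), if ∅ ⊆ H then mup y H else 0)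
          = ∑ H : Finset (Fin n), mup y H := by
        apply Finset.sum_congr rfl; intro H _; rw [if_pos (Finset.empty_subset H)]
      rw [h2] at h
      exact h.symm
    -- objective value identity
    have hobj' : ∑ H : Finset (Fin n), mup y H * gval c c0 H < gval c c0 Istar := by
      rw [← obj_eq c c0 y (mup y) hy]; exact hobj
    -- nonnegativity of the shifted quadratic forms on the hyperplane
    have formNN : ∀ (ℓ : Fin m) (s : Finset (Fin n) → ℝ),
        (∑ H : Finset (Fin n), (-1:ℝ)^H.card * s H = 0) →
        0 ≤ ∑ H : Finset (Fin n), gval (a ℓ) (b ℓ) H * mup y H * s H ^ 2 := by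
      intro ℓ s hsyp
      have h := (hshift ℓ).dotProduct_mulVec_nonneg (fun I : Idx n => mob s I.1)
      rw [star_id', dot_nm1] at h
      have hw := shift_eq (a ℓ) (b ℓ) y (mup y) hy
      simp_rw [hw] at h
      rw [double_form (fun H => gval (a ℓ) (b ℓ) H * mup y H)] at h
      simp_rw [zet_ext_mob s hsyp] at h
      exact h
    -- pairwise nonnegativity
    have pair : ∀ (ℓ : Fin m) (H1 H2 : Finset (Fin n)), H1 ≠ H2 →
        0 ≤ gval (a ℓ) (b ℓ) H1 * mup y H1 + gval (a ℓ) (b ℓ) H2 * mup y H2 := by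
      intro ℓ H1 H2 h12
      set s : Finset (Fin n) → ℝ := fun H =>
        if H = H1 then (-1:ℝ)^H1.card else if H = H2 then -(-1:ℝ)^H2.card else 0 with hs
      have hsH1 : s H1 = (-1:ℝ)^H1.card := by simp [hs]
      have hsH2 : s H2 = -(-1:ℝ)^H2.card := by simp [hs, Ne.symm h12]
      have hyp : ∑ H : Finset (Fin n), (-1:ℝ)^H.card * s H = 0 := by
        rw [sum_two (fun H => (-1:ℝ)^H.card * s H) H1 H2 h12
          (fun H hA hB => by simp [hs, hA, hB])]
        rw [hsH1, hsH2]
        linear_combination hsq1 H1.card - hsq1 H2.card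
      have h := formNN ℓ s hyp
      rw [sum_two (fun H => gval (a ℓ) (b ℓ) H * mup y H * s H ^ 2) H1 H2 h12
        (fun H hA hB => by simp [hs, hA, hB])] at h
      rw [hsH1, hsH2] at h
      have e2 : (-(-1:ℝ)^H2.card)^2 = 1 := by rw [neg_sq]; exact hsq1 H2.card
      rw [hsq1 H1.card, e2, mul_one, mul_one] at h
      exact h
    -- existence of an infeasible point with positive mass
    have hex : ∃ H0 : Finset (Fin n), 0 < mup y H0 ∧
        ∃ ℓ0 : Fin m, gval (a ℓ0) (b ℓ0) H0 < 0 := by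
      by_contra hcon
      push_neg at hcon
      have hge : ∀ H : Finset (Fin n),
          mup y H * gval c c0 Istar ≤ mup y H * gval c c0 H := by
        intro H
        rcases lt_or_eq_of_le (hY0 H) with h | h
        · exact mul_le_mul_of_nonneg_left (hIstar_opt H (hcon H h)) (le_of_lt h)
        · rw [← h]; simp
      have hcontr : gval c c0 Istar ≤ ∑ H : Finset (Fin n), mup y H * gval c c0 H := by
        calc gval c c0 Istar = ∑ H : Finset (Fin n), mup y H * gval c c0 Istar := by
              rw [← Finset.sum_mul, hsum1, one_mul]
        _ ≤ _ := Finset.sum_le_sum (fun H _ => hge H)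
      linarith [hobj']
    obtain ⟨H0, hH0pos, ℓ0, hg0⟩ := hex
    -- strict positivity of all Möbius coefficients
    have hv0 : gval (a ℓ0) (b ℓ0) H0 * mup y H0 < 0 := mul_neg_of_neg_of_pos hg0 hH0pos
    have hpos_all : ∀ J : Finset (Fin n), J ≠ H0 →
        0 < gval (a ℓ0) (b ℓ0) J * mup y J := by
      intro J hJ
      have hp := pair ℓ0 J H0 hJ
      linarith
    have hYpos : ∀ H : Finset (Fin n), 0 < mup y H := by
      intro H
      rcases eq_or_ne H H0 with h | h
      · rw [h]; exact hH0pos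
      · have hv := hpos_all H h
        rcases lt_or_eq_of_le (hY0 H) with h' | h'
        · exact h'
        · exfalso; rw [← h', mul_zero] at hv; exact lt_irrefl 0 hv
    -- the unique negative point for each constraint
    have main3 : ∀ ℓ : Fin m, ∃ K : Finset (Fin n),
        gval (a ℓ) (b ℓ) K * mup y K < 0 ∧
        ∀ J : Finset (Fin n), J ≠ K → 0 < gval (a ℓ) (b ℓ) J * mup y J := by
      intro ℓ
      obtain ⟨K, hK⟩ := hnonred ℓ
      have hKv : gval (a ℓ) (b ℓ) K * mup y K < 0 := mul_neg_of_neg_of_pos hK (hYpos K)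
      exact ⟨K, hKv, fun J hJ => by have hp := pair ℓ J K hJ; linarith⟩
    -- the harmonic-mean inequality for each constraint
    have main4 : ∀ ℓ : Fin m,
        ∑ I : Finset (Fin n), 1 / (gval (a ℓ) (b ℓ) I * mup y I) ≤ 0 := by
      intro ℓ
      obtain ⟨K, hKv, hKpos⟩ := main3 ℓ
      have hEne : ((Finset.univ : Finset (Finset (Fin n))).erase K).Nonempty := by
        rcases eq_or_ne K ∅ with h | h
        · exact ⟨Finset.univ, by simp [h, (empty_ne_univ hn).symm]⟩
        · exact ⟨∅, by simp [Ne.symm h]⟩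
      set T := ∑ J ∈ (Finset.univ : Finset (Finset (Fin n))).erase K,
        (gval (a ℓ) (b ℓ) J * mup y J)⁻¹ with hTdef
      have hTpos : 0 < T := by
        rw [hTdef]
        exact Finset.sum_pos
          (fun J hJ => inv_pos.2 (hKpos J (Finset.ne_of_mem_erase hJ))) hEne
      set s : Finset (Fin n) → ℝ := fun H =>
        if H = K then -(-1:ℝ)^K.card * T
        else (-1:ℝ)^H.card * (gval (a ℓ) (b ℓ) H * mup y H)⁻¹ with hs
      have hsK : s K = -(-1:ℝ)^K.card * T := by simp [hs]
      have hsJ : ∀ H : Finset (Fin n), H ≠ K →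
          s H = (-1:ℝ)^H.card * (gval (a ℓ) (b ℓ) H * mup y H)⁻¹ :=
        fun H hH => by simp [hs, hH]
      have hyp : ∑ H : Finset (Fin n), (-1:ℝ)^H.card * s H = 0 := by
        rw [← Finset.add_sum_erase _ (fun H => (-1:ℝ)^H.card * s H) (Finset.mem_univ K)]
        have hterm : (-1:ℝ)^K.card * s K = -T := by
          rw [hsK]; linear_combination (-T) * hsq1 K.card
        have hrest : (∑ H ∈ (Finset.univ : Finset (Finset (Fin n))).erase K,
            (-1:ℝ)^H.card * s H) = T := by
          rw [hTdef]
          apply Finset.sum_congr rfl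
          intro H hH
          rw [hsJ H (Finset.ne_of_mem_erase hH)]
          linear_combination (gval (a ℓ) (b ℓ) H * mup y H)⁻¹ * hsq1 H.card
        rw [hterm, hrest]; ring
      have h := formNN ℓ s hyp
      have heval : ∑ H : Finset (Fin n), gval (a ℓ) (b ℓ) H * mup y H * s H ^ 2
          = gval (a ℓ) (b ℓ) K * mup y K * T^2 + T := by
        rw [← Finset.add_sum_erase _
          (fun H => gval (a ℓ) (b ℓ) H * mup y H * s H ^ 2) (Finset.mem_univ K)]
        have hterm : gval (a ℓ) (b ℓ) K * mup y K * s K ^ 2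
            = gval (a ℓ) (b ℓ) K * mup y K * T^2 := by
          rw [hsK, mul_pow, neg_sq, hsq1 K.card, one_mul]
        have hrest : (∑ H ∈ (Finset.univ : Finset (Finset (Fin n))).erase K,
            gval (a ℓ) (b ℓ) H * mup y H * s H ^ 2) = T := by
          rw [hTdef]
          apply Finset.sum_congr rfl
          intro H hH
          have hne := Finset.ne_of_mem_erase hH
          have hvH : gval (a ℓ) (b ℓ) H * mup y H ≠ 0 := ne_of_gt (hKpos H hne)
          rw [hsJ H hne, mul_pow, hsq1 H.card, one_mul, sq, ← mul_assoc,
            mul_inv_cancel₀ hvH, one_mul]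
        rw [hterm, hrest]
      rw [heval] at h
      -- conclude the harmonic inequality
      have hsplit : ∑ I : Finset (Fin n), 1 / (gval (a ℓ) (b ℓ) I * mup y I)
          = 1 / (gval (a ℓ) (b ℓ) K * mup y K) + T := by
        rw [← Finset.add_sum_erase _
          (fun I => 1 / (gval (a ℓ) (b ℓ) I * mup y I)) (Finset.mem_univ K), hTdef]
        congr 1
        apply Finset.sum_congr rfl
        intro H _
        rw [one_div]
      rw [hsplit, one_div]
      have hinv : gval (a ℓ) (b ℓ) K * mup y K * (gval (a ℓ) (b ℓ) K * mup y K)⁻¹ = 1 :=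
        mul_inv_cancel₀ (ne_of_lt hKv)
      have hu : (gval (a ℓ) (b ℓ) K * mup y K)⁻¹ < 0 := inv_lt_zero.mpr hKv
      have h2 : 0 ≤ -((gval (a ℓ) (b ℓ) K * mup y K)⁻¹)
          * (gval (a ℓ) (b ℓ) K * mup y K * T ^ 2 + T) :=
        mul_nonneg (le_of_lt (neg_pos.2 hu)) h
      have h3 : -((gval (a ℓ) (b ℓ) K * mup y K)⁻¹)
          * (gval (a ℓ) (b ℓ) K * mup y K * T ^ 2 + T)
          = -T^2 - (gval (a ℓ) (b ℓ) K * mup y K)⁻¹ * T := by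
        linear_combination (-(T^2)) * hinv
      have h4 : 0 ≤ -T^2 - (gval (a ℓ) (b ℓ) K * mup y K)⁻¹ * T := h3 ▸ h2
      nlinarith [h4, hTpos]
    exact ⟨mup y, hYpos, hsum1, main3, main4, hobj'⟩
  · -- backward direction: the certificate yields a gap solution
    rintro ⟨Y, hYpos, hYsum, hKex, hharm, hobj⟩
    set y : Finset (Fin n) → ℝ :=
      fun K => ∑ H : Finset (Fin n), if K ⊆ H then Y H else 0 with hydef
    have hy : ∀ K, y K = ∑ H : Finset (Fin n), if K ⊆ H then Y H else 0 :=
      fun K => by simp only [hydef]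
    have hyempty : y ∅ = 1 := by
      rw [hy ∅]
      have h2 : (∑ H : Finset (Fin n), if ∅ ⊆ H then Y H else 0)
          = ∑ H : Finset (Fin n), Y H := by
        apply Finset.sum_congr rfl; intro H _; rw [if_pos (Finset.empty_subset H)]
      rw [h2]; exact hYsum
    refine ⟨y, hyempty, ?_, ?_, ?_⟩
    · -- full moment matrix is PSD
      refine Matrix.PosSemidef.of_dotProduct_mulVec_nonneg (herm_full y) (fun x => ?_)
      rw [star_id, dot_full]
      simp_rw [hy]
      rw [double_form Y x]
      apply Finset.sum_nonneg
      intro H _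
      exact mul_nonneg (le_of_lt (hYpos H)) (sq_nonneg _)
    · -- shifted moment matrices are PSD
      intro ℓ
      refine Matrix.PosSemidef.of_dotProduct_mulVec_nonneg (herm_nm1 _) (fun x => ?_)
      rw [star_id', dot_nm1]
      simp_rw [shift_eq (a ℓ) (b ℓ) y Y hy]
      rw [double_form (fun H => gval (a ℓ) (b ℓ) H * Y H) (ext x)]
      obtain ⟨K, hKneg, hKpos⟩ := hKex ℓ
      have hsum' : ∑ H : Finset (Fin n), (gval (a ℓ) (b ℓ) H * Y H)⁻¹ ≤ 0 := by
        have := hharm ℓ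
        simpa [one_div] using this
      exact psd_quad hn (fun H => gval (a ℓ) (b ℓ) H * Y H) K hKneg hKpos hsum'
        (zet (ext x)) (hyperplane (ext x) (ext_univ x))
    · -- objective gap
      rw [obj_eq c c0 y Y hy]
      exact hobj
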